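/- arXiv:cond-mat/9907130 — 3 statements merged into one kernel-verified Lean document; each statement's English description precedes it below -/
import Mathlib

section
/- Let β > 0 and let U : ℝ × ℝ → ℝ be measurable and bounded, with U(a, b) = 0 whenever a, b ≥ 0 and a + b > 1/2. For n ∈ ℤ set k₀(n) = (2n+1)π/β. Then (1/β) · Σ_{n ∈ ℤ} ∫_{ℝ²} [ (i·k₀(n) + (‖k‖² - 1)) / (k₀(n)² + (‖k‖² - 1)²) ] · U(k₀(n)², (‖k‖² - 1)²) dk = 0; moreover only finitely many terms of the sum are nonzero and each integral is absolutely convergent. -/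
open MeasureTheory

lemma radial_odd_zero (g : ℝ → ℂ) (hodd : ∀ t : ℝ, g (-t) = -g t)
    (hsupp : ∀ t : ℝ, 1 < |t| → g t = 0) :
    ∫ k : EuclideanSpace ℝ (Fin 2), g (‖k‖ ^ 2 - 1) = 0 := by
  have hline : ∫ t : ℝ, g t = 0 := by
    have h1 : ∫ t : ℝ, g (-t) = ∫ t : ℝ, g t :=
      (Measure.measurePreserving_neg (volume : Measure ℝ)).integral_comp
        (Homeomorph.neg ℝ).measurableEmbedding g
    simp only [hodd, integral_neg] at h1
    linear_combination (-1/2 : ℂ) * h1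
  have hIoi : ∫ t in Set.Ioi (-1 : ℝ), g t = 0 := by
    have hae : ∀ᵐ t : ℝ, t ≠ (-1 : ℝ) := by
      refine ae_iff.2 ?_
      simpa using measure_singleton (-1 : ℝ)
    have hcong : g =ᵐ[volume] (Set.Ioi (-1 : ℝ)).indicator g := by
      filter_upwards [hae] with t ht
      by_cases h : (-1 : ℝ) < t
      · rw [Set.indicator_of_mem (show t ∈ Set.Ioi (-1:ℝ) from h)]
      · have h' : t < -1 := lt_of_le_of_ne (not_lt.1 h) ht
        rw [Set.indicator_of_notMem (show t ∉ Set.Ioi (-1:ℝ) by simpa using not_lt.2 h'.le)]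
        exact hsupp t (by rw [abs_of_neg (by linarith)]; linarith)
    rw [← hline, integral_congr_ae hcong, integral_indicator measurableSet_Ioi]
  have himg : (fun y : ℝ => y ^ 2 - 1) '' Set.Ioi 0 = Set.Ioi (-1 : ℝ) := by
    ext x
    simp only [Set.mem_image, Set.mem_Ioi]
    constructor
    · rintro ⟨y, hy, rfl⟩; nlinarith
    · intro hx
      refine ⟨Real.sqrt (x + 1), Real.sqrt_pos.2 (by linarith), ?_⟩
      rw [Real.sq_sqrt (by linarith)]; ring
  have hinj : Set.InjOn (fun y : ℝ => y ^ 2 - 1) (Set.Ioi 0) := by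
    intro a ha b hb h
    simp only [Set.mem_Ioi] at ha hb
    have h2 : (a - b) * (a + b) = 0 := by linear_combination h
    rcases mul_eq_zero.1 h2 with h3 | h3
    · linarith
    · linarith
  have hderiv : ∀ y ∈ Set.Ioi (0 : ℝ),
      HasDerivWithinAt (fun y : ℝ => y ^ 2 - 1) (2 * y) (Set.Ioi 0) y := by
    intro y hy
    simpa using ((hasDerivAt_pow 2 y).sub_const 1).hasDerivWithinAt
  have hsub : ∫ x in Set.Ioi (-1 : ℝ), g x
      = ∫ y in Set.Ioi (0 : ℝ), |2 * y| • g (y ^ 2 - 1) := by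
    rw [← himg]
    exact integral_image_eq_integral_abs_deriv_smul measurableSet_Ioi hderiv hinj g
  have hsmul : ∫ y in Set.Ioi (0 : ℝ), |2 * y| • g (y ^ 2 - 1)
      = (2 : ℝ) • ∫ y in Set.Ioi (0 : ℝ), y • g (y ^ 2 - 1) := by
    rw [← integral_smul]
    refine setIntegral_congr_fun measurableSet_Ioi fun y hy => ?_
    simp only [Set.mem_Ioi] at hy
    rw [abs_of_pos (by linarith), smul_smul]
  have hI0 : ∫ y in Set.Ioi (0 : ℝ), y • g (y ^ 2 - 1) = 0 := by
    have h := hIoi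
    rw [hsub, hsmul] at h
    simpa using h
  have hmain := MeasureTheory.integral_fun_norm_addHaar
    (volume : Measure (EuclideanSpace ℝ (Fin 2))) (fun y : ℝ => g (y ^ 2 - 1))
  simp only [finrank_euclideanSpace_fin] at hmain
  rw [hmain]
  simp only [Complex.real_smul] at hI0
  norm_num [hI0]

lemma tadpole_meas (U : ℝ → ℝ → ℝ) (hU : Measurable (Function.uncurry U)) (a : ℝ) :
    Measurable (fun k : EuclideanSpace ℝ (Fin 2) =>
      ((Complex.I * (a : ℂ) + ((‖k‖ ^ 2 - 1 : ℝ) : ℂ)) /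
          ((a ^ 2 + (‖k‖ ^ 2 - 1) ^ 2 : ℝ) : ℂ)) *
        ((U (a ^ 2) ((‖k‖ ^ 2 - 1) ^ 2) : ℝ) : ℂ)) := by
  have he : Measurable (fun k : EuclideanSpace ℝ (Fin 2) => ‖k‖ ^ 2 - 1) :=
    (measurable_norm.pow_const 2).sub_const 1
  have hu : Measurable (fun k : EuclideanSpace ℝ (Fin 2) =>
      U (a ^ 2) ((‖k‖ ^ 2 - 1) ^ 2)) :=
    hU.comp (measurable_const.prodMk (he.pow_const 2))
  refine Measurable.mul ?_ (Complex.measurable_ofReal.comp hu)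
  refine Measurable.div ?_
    (Complex.measurable_ofReal.comp (measurable_const.add (he.pow_const 2)))
  exact measurable_const.add (Complex.measurable_ofReal.comp he)

/-- The tadpole lemma: with dispersion `e(k) = ‖k‖² - 1`, propagator
`(i k₀ + e(k))/(k₀² + e(k)²)` at Matsubara frequencies `k₀ = (2n+1)π/β`, and a band
cutoff `U[k₀², e²]` supported in `k₀² + e² ≤ 1/2`, the tadpole amplitude vanishes:
each spatial integral is absolutely convergent, only finitely many Matsubara terms are
nonzero, and the full sum is zero. -/
theorem stmt2 (β : ℝ) (hβ : 0 < β) (U : ℝ → ℝ → ℝ)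
    (hUmeas : Measurable (Function.uncurry U))
    (hUbdd : ∃ M : ℝ, ∀ a b : ℝ, |U a b| ≤ M)
    (hUsupp : ∀ a b : ℝ, 0 ≤ a → 0 ≤ b → 1 / 2 < a + b → U a b = 0)
    (k₀ : ℤ → ℝ) (hk₀ : ∀ n : ℤ, k₀ n = (2 * (n : ℝ) + 1) * Real.pi / β)
    (term : ℤ → ℂ)
    (hterm : ∀ n : ℤ, term n = ∫ k : EuclideanSpace ℝ (Fin 2),
        ((Complex.I * (k₀ n : ℂ) + ((‖k‖ ^ 2 - 1 : ℝ) : ℂ)) /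
            (((k₀ n) ^ 2 + (‖k‖ ^ 2 - 1) ^ 2 : ℝ) : ℂ)) *
          ((U ((k₀ n) ^ 2) ((‖k‖ ^ 2 - 1) ^ 2) : ℝ) : ℂ)) :
    (∀ n : ℤ, Integrable (fun k : EuclideanSpace ℝ (Fin 2) =>
        ((Complex.I * (k₀ n : ℂ) + ((‖k‖ ^ 2 - 1 : ℝ) : ℂ)) /
            (((k₀ n) ^ 2 + (‖k‖ ^ 2 - 1) ^ 2 : ℝ) : ℂ)) *
          ((U ((k₀ n) ^ 2) ((‖k‖ ^ 2 - 1) ^ 2) : ℝ) : ℂ))) ∧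
    {n : ℤ | term n ≠ 0}.Finite ∧
    (1 / (β : ℂ)) * ∑' n : ℤ, term n = 0 := by
  obtain ⟨M, hM⟩ := hUbdd
  set M' : ℝ := max M 0 with hM'def
  have hM' : ∀ a b : ℝ, |U a b| ≤ M' := fun a b => (hM a b).trans (le_max_left _ _)
  have hM'0 : 0 ≤ M' := le_max_right _ _
  have hk0_ne : ∀ n : ℤ, k₀ n ≠ 0 := by
    intro n
    rw [hk₀]
    have h1 : (2 * (n : ℝ) + 1) ≠ 0 := by
      intro h
      have h2 : ((2 * n + 1 : ℤ) : ℝ) = 0 := by push_cast; linarith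
      have h3 : (2 * n + 1 : ℤ) = 0 := by exact_mod_cast h2
      omega
    exact div_ne_zero (mul_ne_zero h1 Real.pi_ne_zero) hβ.ne'
  have hneg : ∀ n : ℤ, k₀ (-n - 1) = -k₀ n := by
    intro n
    rw [hk₀, hk₀]
    push_cast
    ring
  -- Integrability
  have key_int : ∀ n : ℤ, Integrable (fun k : EuclideanSpace ℝ (Fin 2) =>
      ((Complex.I * (k₀ n : ℂ) + ((‖k‖ ^ 2 - 1 : ℝ) : ℂ)) /
          (((k₀ n) ^ 2 + (‖k‖ ^ 2 - 1) ^ 2 : ℝ) : ℂ)) *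
        ((U ((k₀ n) ^ 2) ((‖k‖ ^ 2 - 1) ^ 2) : ℝ) : ℂ)) := by
    intro n
    set a : ℝ := k₀ n with hadef
    have ha : a ≠ 0 := hk0_ne n
    have ha2 : 0 < a ^ 2 := by positivity
    set f : EuclideanSpace ℝ (Fin 2) → ℂ := fun k =>
      ((Complex.I * (a : ℂ) + ((‖k‖ ^ 2 - 1 : ℝ) : ℂ)) /
          ((a ^ 2 + (‖k‖ ^ 2 - 1) ^ 2 : ℝ) : ℂ)) *
        ((U (a ^ 2) ((‖k‖ ^ 2 - 1) ^ 2) : ℝ) : ℂ) with hfdef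
    have hsupport : Function.support f ⊆ Metric.closedBall 0 2 := by
      intro k hk
      rw [Metric.mem_closedBall, dist_zero_right]
      by_contra h
      push_neg at h
      apply hk
      have h1 : (2:ℝ) ≤ ‖k‖ := by linarith
      have h4 : (4:ℝ) ≤ ‖k‖ ^ 2 := by nlinarith
      have h9 : (9:ℝ) ≤ (‖k‖ ^ 2 - 1) ^ 2 := by nlinarith
      have h2 : (1:ℝ)/2 < a ^ 2 + (‖k‖ ^ 2 - 1) ^ 2 := by nlinarith [sq_nonneg a]
      rw [hfdef]
      simp only
      rw [hUsupp _ _ (sq_nonneg _) (sq_nonneg _) h2]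
      simp
    have hbound : ∀ k, ‖f k‖ ≤ ((|a| + 1) / a ^ 2) * M' := by
      intro k
      set e : ℝ := ‖k‖ ^ 2 - 1 with hedef
      by_cases hU : U (a ^ 2) (e ^ 2) = 0
      · rw [hfdef]
        simp only [← hedef, hU]
        simp
        positivity
      · have he2 : e ^ 2 ≤ 1 / 2 := by
          by_contra hlt
          push_neg at hlt
          exact hU (hUsupp _ _ (sq_nonneg _) (sq_nonneg _) (by nlinarith))
        have habs : |e| ≤ 1 := by
          nlinarith [abs_nonneg e, sq_abs e]
        rw [hfdef]
        simp only [← hedef, norm_mul, norm_div]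
        have hnum : ‖Complex.I * (a : ℂ) + ((e : ℝ) : ℂ)‖ ≤ |a| + 1 := by
          calc ‖Complex.I * (a : ℂ) + ((e : ℝ) : ℂ)‖
              ≤ ‖Complex.I * (a : ℂ)‖ + ‖((e : ℝ) : ℂ)‖ := norm_add_le _ _
            _ = |a| + |e| := by simp
            _ ≤ |a| + 1 := by linarith
        have hden : a ^ 2 ≤ ‖((a ^ 2 + e ^ 2 : ℝ) : ℂ)‖ := by
          rw [Complex.norm_real, Real.norm_eq_abs, abs_of_nonneg (by positivity)]
          nlinarith [sq_nonneg e]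
        have hU' : ‖((U (a ^ 2) (e ^ 2) : ℝ) : ℂ)‖ ≤ M' := by
          rw [Complex.norm_real, Real.norm_eq_abs]; exact hM' _ _
        refine mul_le_mul ?_ hU' (norm_nonneg _) (by positivity)
        exact div_le_div₀ (by positivity) hnum ha2 hden
    rw [← integrableOn_iff_integrable_of_support_subset hsupport]
    exact Measure.integrableOn_of_bounded (measure_closedBall_lt_top).ne
      (tadpole_meas U hUmeas a).aestronglyMeasurable
      (Filter.Eventually.of_forall hbound)
  refine ⟨key_int, ?_, ?_⟩
  -- Finiteness
  · apply Set.Finite.subset (Set.finite_Icc (-⌈β⌉ - 1) (⌈β⌉ + 1))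
    intro n hn
    simp only [Set.mem_setOf_eq] at hn
    have hsmall : (k₀ n) ^ 2 ≤ 1 / 2 := by
      by_contra hbig
      push_neg at hbig
      apply hn
      rw [hterm]
      have hz : (fun k : EuclideanSpace ℝ (Fin 2) =>
          ((Complex.I * (k₀ n : ℂ) + ((‖k‖ ^ 2 - 1 : ℝ) : ℂ)) /
              (((k₀ n) ^ 2 + (‖k‖ ^ 2 - 1) ^ 2 : ℝ) : ℂ)) *
            ((U ((k₀ n) ^ 2) ((‖k‖ ^ 2 - 1) ^ 2) : ℝ) : ℂ)) = fun _ => (0 : ℂ) := by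
        funext k
        rw [hUsupp _ _ (sq_nonneg _) (sq_nonneg _) (by nlinarith [sq_nonneg (‖k‖ ^ 2 - 1)])]
        simp
      rw [hz, integral_zero]
    -- derive the bound on n
    have hpi : (1:ℝ) ≤ Real.pi := by linarith [Real.pi_gt_three]
    have hx : |(2 * (n : ℝ) + 1) * Real.pi / β| ≤ 1 := by
      rw [← hk₀]
      nlinarith [sq_abs (k₀ n), abs_nonneg (k₀ n)]
    have hx2 : |2 * (n : ℝ) + 1| * Real.pi ≤ β := by
      rw [abs_div, abs_mul, abs_of_pos Real.pi_pos, abs_of_pos hβ] at hx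
      calc |2 * (n : ℝ) + 1| * Real.pi = |2 * (n : ℝ) + 1| * Real.pi / β * β := by
            field_simp
        _ ≤ 1 * β := by
            apply mul_le_mul_of_nonneg_right hx hβ.le
        _ = β := one_mul β
    have hx3 : |2 * (n : ℝ) + 1| ≤ β := by nlinarith [abs_nonneg (2 * (n:ℝ) + 1)]
    have hceil : β ≤ (⌈β⌉ : ℝ) := Int.le_ceil β
    have hup : (n : ℝ) ≤ (⌈β⌉ : ℝ) + 1 := by
      cases abs_le.1 hx3 with
      | intro h1 h2 => linarith
    have hdown : -((⌈β⌉ : ℝ) + 1) ≤ (n : ℝ) := by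
      cases abs_le.1 hx3 with
      | intro h1 h2 => linarith
    constructor
    · exact_mod_cast (by push_cast; linarith : ((-⌈β⌉ - 1 : ℤ) : ℝ) ≤ (n : ℝ))
    · exact_mod_cast (by push_cast; linarith : ((n : ℤ) : ℝ) ≤ ((⌈β⌉ + 1 : ℤ) : ℝ))
  -- the sum is zero
  · have hpair : ∀ n : ℤ, term (-n - 1) + term n = 0 := by
      intro n
      rw [hterm, hterm, ← integral_add (key_int (-n - 1)) (key_int n)]
      set a : ℝ := k₀ n with hadef
      have ha : a ≠ 0 := hk0_ne n
      set g : ℝ → ℂ := fun t => (2 * (t : ℂ)) / ((a ^ 2 + t ^ 2 : ℝ) : ℂ) *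
        ((U (a ^ 2) (t ^ 2) : ℝ) : ℂ) with hgdef
      have hodd : ∀ t : ℝ, g (-t) = -g t := by
        intro t
        rw [hgdef]
        simp only [neg_sq]
        push_cast
        ring
      have hgsupp : ∀ t : ℝ, 1 < |t| → g t = 0 := by
        intro t ht
        have h1 : (1:ℝ) < t ^ 2 := by nlinarith [sq_abs t, abs_nonneg t]
        rw [hgdef]
        simp only
        rw [hUsupp _ _ (sq_nonneg _) (sq_nonneg _) (by nlinarith [sq_nonneg a])]
        simp
      refine Eq.trans (integral_congr_ae (Filter.Eventually.of_forall fun k => ?_))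
        (radial_odd_zero g hodd hgsupp)
      simp only [hgdef]
      rw [hneg n, ← hadef, neg_sq]
      push_cast
      ring
    have hs := (Equiv.subLeft (-1 : ℤ)).tsum_eq term
    simp only [Equiv.subLeft_apply] at hs
    have h2 : ∑' n : ℤ, term (-1 - n) = - ∑' n : ℤ, term n := by
      rw [← tsum_neg]
      refine tsum_congr fun n => ?_
      have h3 : (-1 : ℤ) - n = -n - 1 := by ring
      rw [h3]
      linear_combination hpair n
    rw [h2] at hs
    have hsum : ∑' n : ℤ, term n = 0 := by linear_combination (-1/2 : ℂ) * hs
    rw [hsum, mul_zero]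
end

section
/- Let H be an inner product space over ℂ, let n ∈ ℕ, and let f, g : Fin n → H. Let M be the n × n matrix with entries M i j = ⟨f i, g j⟩. Then |det M| ≤ (∏_{i} ‖f i‖) · (∏_{j} ‖g j‖). -/
open Finset Submodule Matrix InnerProductSpace

instance gramAux_finWF (n : ℕ) : WellFoundedLT (Fin n) := inferInstance

lemma norm_gramSchmidt_le' {H : Type*} [NormedAddCommGroup H] [InnerProductSpace ℂ H]
    {n : ℕ} (g : Fin n → H) (j : Fin n) : ‖gramSchmidt ℂ g j‖ ≤ ‖g j‖ := by
  set q : H := ∑ i ∈ Finset.Iio j, (orthogonalProjection (ℂ ∙ gramSchmidt ℂ g i) (g j) : H) with hqdef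
  have hq : (inner ℂ (gramSchmidt ℂ g j) q : ℂ) = 0 := by
    rw [hqdef, inner_sum]
    refine Finset.sum_eq_zero fun i hi => ?_
    rw [← starProjection_apply, starProjection_singleton, inner_smul_right,
      gramSchmidt_orthogonal ℂ g (Finset.mem_Iio.mp hi).ne', mul_zero]
  have hdef : g j = gramSchmidt ℂ g j + q := gramSchmidt_def' ℂ g j
  have h2 : ‖g j‖ ^ 2 = ‖gramSchmidt ℂ g j‖ ^ 2 + ‖q‖ ^ 2 := by
    rw [hdef, @norm_add_sq ℂ, hq]
    simp
  nlinarith [norm_nonneg (g j), norm_nonneg (gramSchmidt ℂ g j), norm_nonneg q]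

lemma det_inner_gramSchmidt {H : Type*} [NormedAddCommGroup H] [InnerProductSpace ℂ H]
    {n : ℕ} (f g : Fin n → H) :
    (Matrix.of fun i j => (inner ℂ (f i) (g j) : ℂ)).det
      = (Matrix.of fun i j => (inner ℂ (f i) (gramSchmidt ℂ g j) : ℂ)).det := by
  classical
  set g' := gramSchmidt ℂ g with hg'
  set N : Matrix (Fin n) (Fin n) ℂ := Matrix.of fun i j => (inner ℂ (f i) (g' j) : ℂ) with hN
  set U : Matrix (Fin n) (Fin n) ℂ := Matrix.of fun k j =>
    if k = j then 1 else if k < j then (inner ℂ (g' k) (g j) : ℂ) / (‖g' k‖ : ℂ) ^ 2 else 0 with hU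
  have hfact : (Matrix.of fun i j => (inner ℂ (f i) (g j) : ℂ)) = N * U := by
    ext i j
    rw [Matrix.mul_apply]
    have hzero : ∀ k ∈ Finset.univ, k ∉ Finset.Iic j → N i k * U k j = 0 := by
      intro k _ hk
      have h1 : ¬ k ≤ j := by simpa using hk
      have h2 : k ≠ j := fun h => h1 (le_of_eq h)
      have h3 : ¬ k < j := fun h => h1 h.le
      simp [hU, h2, h3]
    rw [← Finset.sum_subset (Finset.subset_univ (Finset.Iic j)) hzero]
    rw [show Finset.Iic j = insert j (Finset.Iio j) by
      ext k; simp [Finset.mem_Iic, Finset.mem_Iio, le_iff_lt_or_eq, or_comm],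
      Finset.sum_insert (by simp)]
    have hjj : U j j = 1 := by simp [hU]
    simp only [Matrix.of_apply]
    conv_lhs => rw [show g j = g' j + ∑ k ∈ Finset.Iio j,
      ((inner ℂ (g' k) (g j) : ℂ) / (‖g' k‖ : ℂ) ^ 2) • g' k from by
        rw [hg']; exact gramSchmidt_def'' ℂ g j]
    rw [inner_add_right, inner_sum]
    rw [hjj, mul_one]
    congr 1
    refine Finset.sum_congr rfl fun k hk => ?_
    have hk' : k < j := Finset.mem_Iio.mp hk
    rw [inner_smul_right]
    simp [hU, hN, hk', hk'.ne, mul_comm]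
  have hUdet : U.det = 1 := by
    have htri : U.BlockTriangular id := by
      intro i j hij
      have h1 : i ≠ j := ne_of_gt hij
      have h2 : ¬ i < j := not_lt_of_gt hij
      simp [hU, h1, h2]
    rw [Matrix.det_of_upperTriangular htri]
    simp [hU]
  rw [hfact, Matrix.det_mul, hUdet, mul_one]

lemma gram_hadamard_cols {n : ℕ} (v : Fin n → EuclideanSpace ℂ (Fin n)) :
    ‖(Matrix.of fun i j => v j i).det‖ ≤ ∏ j, ‖v j‖ := by
  classical
  have hA : (Matrix.of fun i j => v j i)
      = Matrix.of fun i j => (inner ℂ (EuclideanSpace.single i (1:ℂ)) (v j) : ℂ) := by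
    ext i j
    simp [EuclideanSpace.inner_single_left]
  rw [hA, det_inner_gramSchmidt]
  set v' := gramSchmidt ℂ v with hv'
  set B : Matrix (Fin n) (Fin n) ℂ :=
    Matrix.of fun i j => (inner ℂ (EuclideanSpace.single i (1:ℂ)) (v' j) : ℂ) with hB
  have hBe : ∀ i j, B i j = v' j i := by
    intro i j; simp [hB, EuclideanSpace.inner_single_left]
  have hBB : Bᴴ * B = Matrix.diagonal fun j => ((‖v' j‖ : ℂ)) ^ 2 := by
    ext j k
    rw [Matrix.mul_apply]
    have : ∑ i, Bᴴ j i * B i k = (inner ℂ (v' j) (v' k) : ℂ) := by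
      rw [PiLp.inner_apply]
      refine Finset.sum_congr rfl fun i _ => ?_
      rw [Matrix.conjTranspose_apply, hBe, hBe]
      simp [RCLike.inner_apply, mul_comm]
    rw [this]
    by_cases h : j = k
    · subst h
      simp [Matrix.diagonal_apply_eq, inner_self_eq_norm_sq_to_K]
    · rw [gramSchmidt_orthogonal ℂ v h, Matrix.diagonal_apply_ne _ h]
  have hdet2 : ((‖B.det‖ : ℂ)) ^ 2 = ∏ j, ((‖v' j‖ : ℂ)) ^ 2 := by
    have h1 : star B.det * B.det = ∏ j, ((‖v' j‖ : ℂ)) ^ 2 := by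
      rw [← Matrix.det_conjTranspose, ← Matrix.det_mul, hBB, Matrix.det_diagonal]
    rw [← h1, RCLike.star_def, RCLike.conj_mul]
    norm_cast
  have hreal : ‖B.det‖ ^ 2 = ∏ j, ‖v' j‖ ^ 2 := by
    exact_mod_cast hdet2
  have hle : ∏ j, ‖v' j‖ ^ 2 ≤ (∏ j, ‖v j‖) ^ 2 := by
    rw [← Finset.prod_pow]
    exact Finset.prod_le_prod (fun j _ => by positivity)
      (fun j _ => by
        have := norm_gramSchmidt_le' v j
        nlinarith [norm_nonneg (v' j)])
  have h0 : (0:ℝ) ≤ ∏ j, ‖v j‖ := Finset.prod_nonneg fun j _ => norm_nonneg _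
  nlinarith [norm_nonneg B.det]

/-- Gram's inequality: the determinant of a matrix of scalar products of vectors in a
complex inner product space is bounded by the product of the norms of the vectors. -/
theorem stmt4 {H : Type*} [NormedAddCommGroup H] [InnerProductSpace ℂ H]
    (n : ℕ) (f g : Fin n → H)
    (M : Matrix (Fin n) (Fin n) ℂ)
    (hM : ∀ i j, M i j = inner ℂ (f i) (g j)) :
    ‖M.det‖ ≤ (∏ i, ‖f i‖) * (∏ j, ‖g j‖) := by
  classical
  have hM' : M = Matrix.of fun i j => (inner ℂ (f i) (g j) : ℂ) := by
    ext i j; exact hM i j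
  set g' : Fin n → H := gramSchmidt ℂ g with hg'
  have h1 : M.det = (Matrix.of fun i j => (inner ℂ (f i) (g' j) : ℂ)).det := by
    rw [hM']; exact det_inner_gramSchmidt f g
  have hRHS : (0:ℝ) ≤ (∏ i, ‖f i‖) * (∏ j, ‖g j‖) := by positivity
  by_cases hz : ∃ j, g' j = 0
  · obtain ⟨j0, hj0⟩ := hz
    have hzero : (Matrix.of fun i j => (inner ℂ (f i) (g' j) : ℂ)).det = 0 :=
      Matrix.det_eq_zero_of_column_eq_zero j0 (fun i => by simp [hj0])
    rw [h1, hzero, norm_zero]; exact hRHS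
  · push_neg at hz
    have hnz : ∀ j, ‖g' j‖ ≠ 0 := fun j => norm_ne_zero_iff.mpr (hz j)
    set e : Fin n → H := fun j => ((‖g' j‖ : ℂ))⁻¹ • g' j with he_def
    have he : Orthonormal ℂ e := by
      rw [orthonormal_iff_ite]
      intro i j
      simp only [he_def, inner_smul_left, inner_smul_right]
      by_cases h : i = j
      · subst h
        rw [inner_self_eq_norm_sq_to_K, if_pos rfl]
        rw [map_inv₀, Complex.conj_ofReal]
        have hx : ((‖g' i‖ : ℝ) : ℂ) ≠ 0 := by exact_mod_cast hnz i
        field_simp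
        norm_cast
      · rw [gramSchmidt_orthogonal ℂ g h, if_neg h]
        simp
    have hge : ∀ j, g' j = (‖g' j‖ : ℂ) • e j := by
      intro j
      rw [he_def, smul_smul, mul_inv_cancel₀ (by exact_mod_cast hnz j), one_smul]
    have h2 : (Matrix.of fun i j => (inner ℂ (f i) (g' j) : ℂ)).det
        = (∏ j, (‖g' j‖ : ℂ)) * (Matrix.of fun i j => (inner ℂ (f i) (e j) : ℂ)).det := by
      have heq : (Matrix.of fun i j => (inner ℂ (f i) (g' j) : ℂ))
          = Matrix.of fun i j => (‖g' j‖ : ℂ) * (inner ℂ (f i) (e j) : ℂ) := by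
        ext i j
        simp only [Matrix.of_apply]
        conv_lhs => rw [hge j]
        rw [inner_smul_right]
      rw [heq]
      exact Matrix.det_mul_row _ _
    set w : Fin n → EuclideanSpace ℂ (Fin n) :=
      fun i => (WithLp.equiv 2 _).symm (fun j => (inner ℂ (f i) (e j) : ℂ)) with hw
    have hCle : ‖(Matrix.of fun i j => (inner ℂ (f i) (e j) : ℂ)).det‖ ≤ ∏ i, ‖w i‖ := by
      rw [← Matrix.det_transpose]
      have htr : (Matrix.of fun i j => (inner ℂ (f i) (e j) : ℂ))ᵀ
          = Matrix.of fun i j => w j i := by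
        ext i j
        simp [hw, Matrix.transpose_apply, WithLp.equiv_symm_apply, PiLp.toLp_apply]
      rw [htr]
      exact gram_hadamard_cols w
    have hwle : ∀ i, ‖w i‖ ≤ ‖f i‖ := by
      intro i
      have hb : ∑ j, ‖(inner ℂ (f i) (e j) : ℂ)‖ ^ 2 ≤ ‖f i‖ ^ 2 := by
        have := he.sum_inner_products_le (f i) (s := Finset.univ)
        refine le_trans (le_of_eq ?_) this
        refine Finset.sum_congr rfl fun j _ => ?_
        rw [← norm_inner_symm]
      rw [EuclideanSpace.norm_eq]
      have : ∑ j, ‖w i j‖ ^ 2 = ∑ j, ‖(inner ℂ (f i) (e j) : ℂ)‖ ^ 2 := by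
        refine Finset.sum_congr rfl fun j _ => ?_
        simp [hw, WithLp.equiv_symm_apply, PiLp.toLp_apply]
      rw [this]
      calc Real.sqrt (∑ j, ‖(inner ℂ (f i) (e j) : ℂ)‖ ^ 2)
          ≤ Real.sqrt (‖f i‖ ^ 2) := Real.sqrt_le_sqrt hb
        _ = ‖f i‖ := by rw [Real.sqrt_sq (norm_nonneg _)]
    have hfinal : ‖M.det‖ = (∏ j, ‖g' j‖) * ‖(Matrix.of fun i j => (inner ℂ (f i) (e j) : ℂ)).det‖ := by
      rw [h1, h2, norm_mul]
      congr 1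
      rw [norm_prod]
      exact Finset.prod_congr rfl fun j _ => by simp
    rw [hfinal]
    have hg'le : ∏ j, ‖g' j‖ ≤ ∏ j, ‖g j‖ :=
      Finset.prod_le_prod (fun j _ => norm_nonneg _) (fun j _ => norm_gramSchmidt_le' g j)
    have hCle2 : ‖(Matrix.of fun i j => (inner ℂ (f i) (e j) : ℂ)).det‖ ≤ ∏ i, ‖f i‖ :=
      hCle.trans (Finset.prod_le_prod (fun i _ => norm_nonneg _) (fun i _ => hwle i))
    calc (∏ j, ‖g' j‖) * ‖(Matrix.of fun i j => (inner ℂ (f i) (e j) : ℂ)).det‖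
        ≤ (∏ j, ‖g j‖) * (∏ i, ‖f i‖) := by
          refine mul_le_mul hg'le hCle2 (norm_nonneg _) (Finset.prod_nonneg fun j _ => norm_nonneg _)
      _ = (∏ i, ‖f i‖) * (∏ j, ‖g j‖) := mul_comm _ _
end

section
/- For every s ≥ 1 and every t ≥ 1 there exists a natural number n such that t^{-n} · (n/e)^{n·s} ≤ e^{2s} · exp(- s · t^{1/s}). -/
/-- Optimization over the order of derivation in the Gevrey decay lemmas: for `s ≥ 1`
and `t ≥ 1` there is an `n` with `t^{-n} (n/e)^{ns} ≤ e^{2s} exp(-s t^{1/s})`. -/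
theorem stmt10 (s t : ℝ) (hs : 1 ≤ s) (ht : 1 ≤ t) :
    ∃ n : ℕ, t ^ (-(n : ℝ)) * ((n : ℝ) / Real.exp 1) ^ ((n : ℝ) * s) ≤
      Real.exp (2 * s) * Real.exp (-s * t ^ (1 / s)) := by
  have hs0 : 0 < s := lt_of_lt_of_le one_pos hs
  have ht0 : 0 < t := lt_of_lt_of_le one_pos ht
  set u := t ^ (1 / s) with hu_def
  have hu1 : 1 ≤ u := Real.one_le_rpow ht (by positivity)
  refine ⟨⌊u⌋₊, ?_⟩
  set n := ⌊u⌋₊ with hn_def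
  have hn1 : 1 ≤ n := Nat.le_floor (by exact_mod_cast hu1)
  have hnu : (n : ℝ) ≤ u := Nat.floor_le (by linarith)
  have hun : u < (n : ℝ) + 1 := Nat.lt_floor_add_one u
  have hnpos : (0 : ℝ) < n := by exact_mod_cast hn1
  have hlogu : Real.log u = (1 / s) * Real.log t := Real.log_rpow ht0 _
  have hlogn : Real.log n ≤ Real.log u := Real.log_le_log hnpos hnu
  have h1 : t ^ (-(n : ℝ)) = Real.exp (-(n : ℝ) * Real.log t) := by
    rw [Real.rpow_def_of_pos ht0, mul_comm]
  have h2 : ((n : ℝ) / Real.exp 1) ^ ((n : ℝ) * s)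
      = Real.exp ((n : ℝ) * s * (Real.log n - 1)) := by
    rw [Real.rpow_def_of_pos (by positivity), Real.log_div (ne_of_gt hnpos)
      (ne_of_gt (Real.exp_pos 1)), Real.log_exp, mul_comm]
  rw [h1, h2, ← Real.exp_add, ← Real.exp_add]
  apply Real.exp_le_exp.2
  have hlt : Real.log t = s * Real.log u := by
    rw [hlogu]; field_simp
  rw [hlt]
  have hkey : (n : ℝ) * s * (Real.log n - Real.log u) ≤ 0 := by
    apply mul_nonpos_of_nonneg_of_nonpos
    · positivity
    · linarith
  nlinarith [mul_le_mul_of_nonneg_left (le_of_lt hun) (le_of_lt hs0),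
    mul_le_mul_of_nonneg_left hnu (le_of_lt hs0)]
end
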